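/- If the condensation D* of a digraph D contains no in-ray, in particular if D has only finitely many strong components (e.g., D is finite), then D has a point-basis. -/
import Mathlib


/-- Reachability by a directed walk (allowing the trivial walk). -/
def Reach {V : Type*} (A : V → V → Prop) : V → V → Prop := Relation.ReflTransGen A
/-- The strong component of a vertex: all vertices mutually reachable with it. -/
def SCC {V : Type*} (A : V → V → Prop) (v : V) : Set V :=
  {w | Reach A v w ∧ Reach A w v}

/-- A set is a strong component iff it is the strong component of some vertex. -/
def IsSCC {V : Type*} (A : V → V → Prop) (C : Set V) : Prop := ∃ v, C = SCC A v

/-- A strong component is initial if no arc enters it from outside. -/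
def InitialSCC {V : Type*} (A : V → V → Prop) (C : Set V) : Prop :=
  IsSCC A C ∧ ∀ x y, A x y → y ∈ C → x ∈ C
/-- A set S is point-reaching if every vertex is reachable from some vertex of S. -/
def PointReaching {V : Type*} (A : V → V → Prop) (S : Set V) : Prop :=
  ∀ v : V, ∃ s ∈ S, Reach A s v
/-- A point-basis is a minimal point-reaching set. -/
def IsPointBasis {V : Type*} (A : V → V → Prop) (B : Set V) : Prop :=
  PointReaching A B ∧ ∀ B' ⊂ B, ¬ PointReaching A B'
/-- Arc relation of the condensation D*: between two distinct strong components,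
when some arc of D goes from the first to the second. -/
def CondArc {V : Type*} (A : V → V → Prop) (C₁ C₂ : Set V) : Prop :=
  IsSCC A C₁ ∧ IsSCC A C₂ ∧ C₁ ≠ C₂ ∧ ∃ x ∈ C₁, ∃ y ∈ C₂, A x y

lemma mem_scc_self {V : Type*} (A : V → V → Prop) (v : V) : v ∈ SCC A v :=
  ⟨Relation.ReflTransGen.refl, Relation.ReflTransGen.refl⟩

lemma scc_eq {V : Type*} (A : V → V → Prop) {v w : V} (h1 : Reach A v w) (h2 : Reach A w v) :
    SCC A v = SCC A w := by
  ext x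
  constructor
  · rintro ⟨a, b⟩
    exact ⟨Relation.ReflTransGen.trans h2 a, Relation.ReflTransGen.trans b h1⟩
  · rintro ⟨a, b⟩
    exact ⟨Relation.ReflTransGen.trans h1 a, Relation.ReflTransGen.trans b h2⟩

lemma exists_entry {V : Type*} (A : V → V → Prop) {m : V} :
    ∀ {x : V}, Reach A x m → x ∉ SCC A m →
      ∃ p q, A p q ∧ q ∈ SCC A m ∧ p ∉ SCC A m := by
  intro x hx
  induction hx using Relation.ReflTransGen.head_induction_on with
  | refl => intro hnx; exact absurd (mem_scc_self A m) hnx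
  | @head a c hac hcm ih =>
    intro hnx
    by_cases hc : c ∈ SCC A m
    · exact ⟨a, c, hac, hc, hnx⟩
    · exact ih hc

theorem pointBasis_exists_of_no_inray {V : Type*} (A : V → V → Prop)
    (h : ¬ ∃ f : ℕ → Set V, Function.Injective f ∧ (∀ i, IsSCC A (f i)) ∧
      ∀ i, CondArc A (f (i + 1)) (f i)) :
    ∃ B : Set V, IsPointBasis A B := by
  classical
  -- Main lemma: every vertex is reachable from a "maximal" vertex
  have main : ∀ v, ∃ m, Reach A m v ∧ ∀ x, Reach A x m → Reach A m x := by
    by_contra hc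
    push_neg at hc
    obtain ⟨v, hv⟩ := hc
    have step : ∀ m, Reach A m v →
        ∃ p, Reach A p m ∧ p ∉ SCC A m ∧ CondArc A (SCC A p) (SCC A m) := by
      intro m hm
      obtain ⟨x, hxm, hmx⟩ := hv m hm
      have hxnot : x ∉ SCC A m := fun hmem => hmx hmem.1
      obtain ⟨p, q, hpq, hq, hp⟩ := exists_entry A hxm hxnot
      have hpm : Reach A p m :=
        Relation.ReflTransGen.trans (Relation.ReflTransGen.single hpq) hq.2
      refine ⟨p, hpm, hp, ⟨p, rfl⟩, ⟨m, rfl⟩, ?_, p, mem_scc_self A p, q, hq, hpq⟩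
      intro heq
      exact hp (heq ▸ mem_scc_self A p)
    choose F hF1 hF2 hF3 using step
    let g : ℕ → {m : V // Reach A m v} := fun n =>
      Nat.rec ⟨v, Relation.ReflTransGen.refl⟩
        (fun _ p => ⟨F p.1 p.2, Relation.ReflTransGen.trans (hF1 p.1 p.2) p.2⟩) n
    have hgsucc : ∀ n, (g (n + 1)).1 = F (g n).1 (g n).2 := fun n => rfl
    have hmono : ∀ i j, i ≤ j → Reach A (g j).1 (g i).1 := by
      intro i j hij
      induction j, hij using Nat.le_induction with
      | base => exact Relation.ReflTransGen.refl
      | succ j hij ih =>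
        exact Relation.ReflTransGen.trans (hF1 (g j).1 (g j).2) ih
    have key : ∀ i j, i < j → SCC A (g i).1 ≠ SCC A (g j).1 := by
      intro i j hij heq
      have hnot : (g (i + 1)).1 ∉ SCC A (g i).1 := hF2 (g i).1 (g i).2
      have h1 : (g j).1 ∈ SCC A (g i).1 := heq ▸ mem_scc_self A (g j).1
      have h2 : Reach A (g j).1 (g (i + 1)).1 := hmono (i + 1) j hij
      exact hnot ⟨Relation.ReflTransGen.trans h1.1 h2, hmono i (i + 1) (Nat.le_succ i)⟩
    refine h ⟨fun i => SCC A (g i).1, ?_, fun i => ⟨(g i).1, rfl⟩, fun i => hF3 (g i).1 (g i).2⟩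
    intro i j hij
    by_contra hne
    rcases Nat.lt_or_ge i j with hlt | hge
    · exact key i j hlt hij
    · exact key j i (lt_of_le_of_ne hge (Ne.symm hne)) hij.symm
  -- Construct the point-basis
  have hrep : ∀ C : {C : Set V // ∃ m, C = SCC A m ∧ ∀ x, Reach A x m → Reach A m x},
      ∃ m, C.1 = SCC A m ∧ ∀ x, Reach A x m → Reach A m x := fun C => C.2
  choose rep hrep1 hrep2 using hrep
  refine ⟨Set.range rep, ?_, ?_⟩
  · intro v
    obtain ⟨m, hmv, hmax⟩ := main v
    set C : {C : Set V // ∃ m, C = SCC A m ∧ ∀ x, Reach A x m → Reach A m x} :=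
      ⟨SCC A m, m, rfl, hmax⟩ with hC
    refine ⟨rep C, ⟨C, rfl⟩, ?_⟩
    have hm : m ∈ SCC A (rep C) := by
      have := mem_scc_self A m
      rwa [show SCC A m = C.1 from rfl, hrep1 C] at this
    exact Relation.ReflTransGen.trans hm.1 hmv
  · rintro B' ⟨hsub, hne⟩ hPR
    obtain ⟨b, hbB, hbB'⟩ : ∃ b ∈ Set.range rep, b ∉ B' := by
      by_contra hall
      push_neg at hall
      exact hne fun x hx => hall x hx
    obtain ⟨C, rfl⟩ := hbB
    obtain ⟨s, hsB', hs⟩ := hPR (rep C)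
    have hback : Reach A (rep C) s := hrep2 C s hs
    obtain ⟨C', hC'⟩ := hsub hsB'
    have hCC' : C = C' := by
      apply Subtype.ext
      rw [hrep1 C, hrep1 C', hC']
      exact scc_eq A hback hs
    rw [hCC', hC'] at hbB'
    exact hbB' hsB'
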